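/- Let t_{m,k} be the number of rooted forests on m labeled vertices with exactly k rooted trees. Then for all m ≥ 1 and all integers x: ∑_{k=1}^{m} t_{m,k} x^k = x(x+m)^{m-1}. -/

import Mathlib

/-- `rootedForests m k` is the number of rooted forests on `m` labeled vertices
with exactly `k` rooted trees. -/
noncomputable def rootedForests (m k : ℕ) : ℕ :=
  Nat.card {F : SimpleGraph (Fin m) × Finset (Fin m) //
    F.1.IsAcyclic ∧
    (∀ c : F.1.ConnectedComponent, ∃! v, v ∈ F.2 ∧ F.1.connectedComponentMk v = c) ∧
    F.2.card = k}



open Finset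

namespace RF

variable {m : ℕ}

/-- one step of the parent map on `Option`. -/
def pstep (P : Fin m → Option (Fin m)) : Option (Fin m) → Option (Fin m) :=
  fun o => o.bind P

/-- iterate. -/
def iter (P : Fin m → Option (Fin m)) (j : ℕ) (o : Option (Fin m)) : Option (Fin m) :=
  (pstep P)^[j] o

@[simp] lemma iter_zero (P : Fin m → Option (Fin m)) (o) : iter P 0 o = o := rfl

@[simp] lemma iter_none (P : Fin m → Option (Fin m)) (j) : iter P j none = none := by
  induction j with
  | zero => rfl
  | succ j ih => rw [iter, Function.iterate_succ_apply, show pstep P none = none from rfl]; exact ih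

lemma iter_succ (P : Fin m → Option (Fin m)) (j) (v : Fin m) :
    iter P (j+1) (some v) = iter P j (P v) := by
  rw [iter, Function.iterate_succ_apply]; rfl

lemma iter_add (P : Fin m → Option (Fin m)) (i j) (o) :
    iter P (j + i) o = iter P j (iter P i o) := by
  rw [iter, iter, iter, ← Function.iterate_add_apply]

/-- acyclicity of a parent map. -/
def Acy (P : Fin m → Option (Fin m)) : Prop := ∀ v, ∃ j, iter P j (some v) = none

/-- reachability along parent pointers. -/
def Reach (P : Fin m → Option (Fin m)) (v w : Fin m) : Prop :=
  ∃ j, iter P j (some v) = some w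

lemma reach_refl (P : Fin m → Option (Fin m)) (v) : Reach P v v := ⟨0, rfl⟩

lemma reach_step {P : Fin m → Option (Fin m)} {v w} (h : P v = some w) : Reach P v w :=
  ⟨1, by rw [iter_succ, h]; rfl⟩

lemma reach_trans {P : Fin m → Option (Fin m)} {u v w}
    (h1 : Reach P u v) (h2 : Reach P v w) : Reach P u w := by
  obtain ⟨i, hi⟩ := h1; obtain ⟨j, hj⟩ := h2
  exact ⟨i + j, by rw [Nat.add_comm, iter_add, hi, hj]⟩

lemma reach_step_trans {P : Fin m → Option (Fin m)} {u v w}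
    (h : P u = some v) (h2 : Reach P v w) : Reach P u w :=
  reach_trans (reach_step h) h2

noncomputable def ht {P : Fin m → Option (Fin m)} (hP : Acy P) (v : Fin m) : ℕ :=
  Nat.find (hP v)

lemma ht_spec {P : Fin m → Option (Fin m)} (hP : Acy P) (v) :
    iter P (ht hP v) (some v) = none := Nat.find_spec (hP v)

lemma ht_pos {P : Fin m → Option (Fin m)} (hP : Acy P) (v) : 0 < ht hP v := by
  rcases Nat.eq_zero_or_pos (ht hP v) with h | h
  · exfalso; have := ht_spec hP v; rw [h] at this; simp at this
  · exact h

lemma ht_parent {P : Fin m → Option (Fin m)} (hP : Acy P) {v w} (h : P v = some w) :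
    ht hP w < ht hP v := by
  have hs := ht_spec hP v
  have h1 : iter P (ht hP v - 1 + 1) (some v) = none := by
    rwa [Nat.sub_add_cancel (ht_pos hP v)]
  rw [iter_succ, h] at h1
  have h2 : ht hP w ≤ ht hP v - 1 := Nat.find_le h1
  have := ht_pos hP v
  omega

lemma reach_ht_le {P : Fin m → Option (Fin m)} (hP : Acy P) {v w} (h : Reach P v w) :
    ht hP w ≤ ht hP v := by
  obtain ⟨j, hj⟩ := h
  have hjle : j ≤ ht hP v := by
    by_contra hc
    have : iter P j (some v) = none := by
      have : iter P (ht hP v + (j - ht hP v)) (some v) = none := by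
        rw [Nat.add_comm, iter_add, ht_spec hP v, iter_none]
      rwa [show ht hP v + (j - ht hP v) = j by omega] at this
    rw [hj] at this; simp at this
  have : iter P (j + (ht hP v - j)) (some v) = none := by
    rw [show j + (ht hP v - j) = ht hP v by omega]; exact ht_spec hP v
  rw [Nat.add_comm, iter_add, hj] at this
  exact Nat.le_trans (Nat.find_le this) (by omega)

lemma not_reach_back {P : Fin m → Option (Fin m)} (hP : Acy P) {v w}
    (h : P v = some w) : ¬ Reach P w v := fun hr =>
  absurd (reach_ht_le hP hr) (by have := ht_parent hP h; omega)

lemma parent_ne {P : Fin m → Option (Fin m)} (hP : Acy P) {v w} (h : P v = some w) :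
    v ≠ w := by
  rintro rfl; exact absurd (reach_refl P v) (not_reach_back hP h)

/-- every vertex reaches a terminal vertex. -/
lemma exists_root {P : Fin m → Option (Fin m)} (hP : Acy P) (v : Fin m) :
    ∃ w, Reach P v w ∧ P w = none := by
  generalize hn : ht hP v = n
  induction n using Nat.strong_induction_on generalizing v with
  | _ n ih =>
    cases hPv : P v with
    | none => exact ⟨v, reach_refl P v, hPv⟩
    | some w =>
      obtain ⟨r, hr1, hr2⟩ := ih (ht hP w) (by rw [← hn]; exact ht_parent hP hPv) w rfl
      exact ⟨r, reach_step_trans hPv hr1, hr2⟩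

lemma root_unique_aux {P : Fin m → Option (Fin m)} {v w1 w2} {i j : ℕ}
    (hi : iter P i (some v) = some w1) (e1 : P w1 = none)
    (hj : iter P j (some v) = some w2) (hle : i ≤ j) : w1 = w2 := by
  rcases Nat.eq_or_lt_of_le hle with rfl | hlt
  · rw [hi] at hj; exact Option.some_injective _ hj
  · exfalso
    have hsplit : iter P (j - i) (some w1) = some w2 := by
      have h3 : iter P ((j - i) + i) (some v) = some w2 := by
        rw [show (j - i) + i = j by omega]; exact hj
      rw [iter_add, hi] at h3; exact h3
    have hone : iter P 1 (some w1) = none := by rw [iter_succ, e1]; rfl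
    have hji : j - i = (j - i - 1) + 1 := by omega
    rw [hji, iter_add, hone, iter_none] at hsplit
    simp at hsplit

lemma root_unique {P : Fin m → Option (Fin m)} {v w1 w2}
    (h1 : Reach P v w1) (e1 : P w1 = none) (h2 : Reach P v w2) (e2 : P w2 = none) :
    w1 = w2 := by
  obtain ⟨i, hi⟩ := h1; obtain ⟨j, hj⟩ := h2
  rcases le_total i j with h | h
  · exact root_unique_aux hi e1 hj h
  · exact (root_unique_aux hj e2 hi h).symm

/-- the root of `v`. -/
noncomputable def rootv {P : Fin m → Option (Fin m)} (hP : Acy P) (v : Fin m) : Fin m :=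
  (exists_root hP v).choose

lemma rootv_reach {P : Fin m → Option (Fin m)} (hP : Acy P) (v) :
    Reach P v (rootv hP v) := (exists_root hP v).choose_spec.1

lemma rootv_none {P : Fin m → Option (Fin m)} (hP : Acy P) (v) :
    P (rootv hP v) = none := (exists_root hP v).choose_spec.2

lemma rootv_eq_of {P : Fin m → Option (Fin m)} (hP : Acy P) {v w}
    (h : Reach P v w) (hw : P w = none) : rootv hP v = w :=
  root_unique (rootv_reach hP v) (rootv_none hP v) h hw

lemma rootv_eq_self {P : Fin m → Option (Fin m)} (hP : Acy P) {v} (h : P v = none) :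
    rootv hP v = v := rootv_eq_of hP (reach_refl P v) h

lemma rootv_parent {P : Fin m → Option (Fin m)} (hP : Acy P) {v w} (h : P v = some w) :
    rootv hP v = rootv hP w :=
  rootv_eq_of hP (reach_step_trans h (rootv_reach hP w)) (rootv_none hP w)

lemma rootv_of_reach {P : Fin m → Option (Fin m)} (hP : Acy P) {v w} (h : Reach P v w) :
    rootv hP v = rootv hP w :=
  rootv_eq_of hP (reach_trans h (rootv_reach hP w)) (rootv_none hP w)


section Update
open Function

variable {P Q : Fin m → Option (Fin m)} {c p : Fin m}

/-- removing an edge preserves acyclicity. -/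
lemma acy_update_none (hP : Acy P) (c : Fin m) : Acy (update P c none) := by
  intro v
  generalize hn : ht hP v = n
  induction n using Nat.strong_induction_on generalizing v with
  | _ n ih =>
    by_cases hvc : v = c
    · exact ⟨1, by rw [iter_succ, hvc, update_self]; rfl⟩
    · cases hPv : P v with
      | none => exact ⟨1, by rw [iter_succ, update_of_ne hvc, hPv]; rfl⟩
      | some w =>
        obtain ⟨j, hj⟩ := ih (ht hP w) (by rw [← hn]; exact ht_parent hP hPv) w rfl
        exact ⟨j + 1, by rw [iter_succ, update_of_ne hvc, hPv]; exact hj⟩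

/-- reachability in the edge-removed map implies reachability in the original. -/
lemma reach_of_update_none {v w : Fin m} (hQ : Q = update P c none)
    (h : Reach Q v w) : Reach P v w := by
  obtain ⟨j, hj⟩ := h
  induction j generalizing v with
  | zero => exact ⟨0, hj⟩
  | succ j ih =>
    rw [iter_succ] at hj
    cases hQv : Q v with
    | none => rw [hQv, iter_none] at hj; simp at hj
    | some u =>
      rw [hQv] at hj
      have hvc : v ≠ c := by rintro rfl; rw [hQ, update_self] at hQv; simp at hQv
      have hPv : P v = some u := by rw [hQ, update_of_ne hvc] at hQv; exact hQv
      exact reach_step_trans hPv (ih hj)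

/-- chains avoiding `c` are preserved when the parent of `c` is changed. -/
lemma terminate_of_not_reach (hQ : Acy Q) {v : Fin m}
    (hc : ¬ Reach Q v c) : ∃ j, iter (update Q c (some p)) j (some v) = none := by
  suffices H : ∀ n v, ht hQ v = n → ¬ Reach Q v c →
      ∃ j, iter (update Q c (some p)) j (some v) = none from H _ v rfl hc
  intro n
  induction n using Nat.strong_induction_on with
  | _ n ih =>
    intro v hn hc
    have hvc : v ≠ c := fun h => hc (h ▸ reach_refl Q v)
    cases hQv : Q v with
    | none => exact ⟨1, by rw [iter_succ, update_of_ne hvc, hQv]; rfl⟩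
    | some w =>
      have hwc : ¬ Reach Q w c := fun h => hc (reach_step_trans hQv h)
      obtain ⟨j, hj⟩ := ih (ht hQ w) (by rw [← hn]; exact ht_parent hQ hQv) w rfl hwc
      exact ⟨j + 1, by rw [iter_succ, update_of_ne hvc, hQv]; exact hj⟩

/-- adding an edge from root `c` to `p` (with `p` not in `c`'s tree) preserves acyclicity. -/
lemma acy_update_some (hQ : Acy Q) (hc : Q c = none) (hp : ¬ Reach Q p c) :
    Acy (update Q c (some p)) := by
  set P' := update Q c (some p) with hP'
  have hterm_c : ∃ j, iter P' j (some c) = none := by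
    obtain ⟨j, hj⟩ := terminate_of_not_reach hQ hp (p := p)
    exact ⟨j + 1, by rw [iter_succ, hP', update_self]; exact hj⟩
  have key : ∀ j v, iter Q j (some v) = some c → ∃ i, iter P' i (some v) = none := by
    intro j
    induction j with
    | zero =>
      intro v hj
      simp only [iter_zero, Option.some_inj] at hj
      exact hj ▸ hterm_c
    | succ j ih =>
      intro v hj
      rw [iter_succ] at hj
      cases hQv : Q v with
      | none => rw [hQv, iter_none] at hj; simp at hj
      | some w =>
        rw [hQv] at hj
        have hvc : v ≠ c := by rintro rfl; rw [hc] at hQv; simp at hQv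
        obtain ⟨i, hi⟩ := ih w hj
        exact ⟨i + 1, by rw [iter_succ, hP', update_of_ne hvc, hQv]; exact hi⟩
  intro v
  by_cases hv : Reach Q v c
  · obtain ⟨j, hj⟩ := hv
    exact key j v hj
  · exact terminate_of_not_reach hQ hv

end Update

section Roots

/-- the set of roots of a parent map. -/
def rts (P : Fin m → Option (Fin m)) : Finset (Fin m) :=
  Finset.univ.filter (fun v => P v = none)

lemma mem_rts {P : Fin m → Option (Fin m)} {v} : v ∈ rts P ↔ P v = none := by
  simp [rts]

lemma rootv_mem_rts {P : Fin m → Option (Fin m)} (hP : Acy P) (v) :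
    rootv hP v ∈ rts P := mem_rts.mpr (rootv_none hP v)

lemma rts_update_some {P : Fin m → Option (Fin m)} {c p : Fin m} :
    rts (Function.update P c (some p)) = (rts P).erase c := by
  ext v
  by_cases hv : v = c <;>
    simp [mem_rts, Finset.mem_erase, hv, Function.update_of_ne, Function.update_self]

lemma rts_update_none {P : Fin m → Option (Fin m)} {c : Fin m} :
    rts (Function.update P c none) = insert c (rts P) := by
  ext v
  by_cases hv : v = c <;>
    simp [mem_rts, Finset.mem_insert, hv, Function.update_of_ne, Function.update_self]

end Roots

section Graph

open SimpleGraph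

/-- the simple graph of a parent map. -/
def gp (P : Fin m → Option (Fin m)) : SimpleGraph (Fin m) :=
  SimpleGraph.fromRel (fun v w => P v = some w)

lemma gp_adj {P : Fin m → Option (Fin m)} {v w} :
    (gp P).Adj v w ↔ v ≠ w ∧ (P v = some w ∨ P w = some v) := Iff.rfl

lemma adj_of_parent {P : Fin m → Option (Fin m)} (hP : Acy P) {v w}
    (h : P v = some w) : (gp P).Adj v w :=
  ⟨parent_ne hP h, Or.inl h⟩

lemma reachable_of_reach {P : Fin m → Option (Fin m)} (hP : Acy P) {v w}
    (h : Reach P v w) : (gp P).Reachable v w := by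
  obtain ⟨j, hj⟩ := h
  induction j generalizing v with
  | zero => simp only [iter_zero, Option.some_inj] at hj; exact hj ▸ Reachable.refl v
  | succ j ih =>
    rw [iter_succ] at hj
    cases hPv : P v with
    | none => rw [hPv, iter_none] at hj; simp at hj
    | some u =>
      rw [hPv] at hj
      exact ((adj_of_parent hP hPv).reachable).trans (ih hj)

lemma rootv_eq_of_adj {P : Fin m → Option (Fin m)} (hP : Acy P) {v w}
    (h : (gp P).Adj v w) : rootv hP v = rootv hP w := by
  rcases h.2 with h' | h'
  · exact rootv_parent hP h'
  · exact (rootv_parent hP h').symm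

lemma rootv_eq_of_reachable {P : Fin m → Option (Fin m)} (hP : Acy P) {v w}
    (h : (gp P).Reachable v w) : rootv hP v = rootv hP w := by
  obtain ⟨p⟩ := h
  induction p with
  | nil => rfl
  | cons ha _ ih => exact (rootv_eq_of_adj hP ha).trans ih

/-- the oriented crossing lemma for the cut argument. -/
lemma reach_iff_of_adj {P : Fin m → Option (Fin m)} {v w x y : Fin m}
    (hvw : P v = some w) (hxy : P x = some y) (hne : s(x, y) ≠ s(v, w)) :
    (Reach P x v ↔ Reach P y v) := by
  constructor
  · intro hx
    have hxv : x ≠ v := by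
      rintro rfl
      rw [hvw] at hxy
      exact hne (by rw [Option.some_inj] at hxy; rw [hxy])
    obtain ⟨j, hj⟩ := hx
    cases j with
    | zero => simp only [iter_zero, Option.some_inj] at hj; exact absurd hj hxv
    | succ j =>
      rw [iter_succ, hxy] at hj
      exact ⟨j, hj⟩
  · intro hy; exact reach_step_trans hxy hy

lemma gp_acyclic {P : Fin m → Option (Fin m)} (hP : Acy P) : (gp P).IsAcyclic := by
  rw [isAcyclic_iff_forall_adj_isBridge]
  have key : ∀ v w : Fin m, P v = some w → (gp P).IsBridge s(v, w) := by
    intro v w hvw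
    rw [isBridge_iff]
    show ¬ _
    rintro ⟨p⟩
    -- walk in the edge-deleted graph from v to w
    have cross : ∀ {x y : Fin m}, ((gp P) \ fromEdgeSet {s(v, w)}).Adj x y →
        (Reach P x v ↔ Reach P y v) := by
      intro x y hxy
      rw [sdiff_adj, fromEdgeSet_adj] at hxy
      obtain ⟨hadj, hne⟩ := hxy
      have hxyne : x ≠ y := hadj.ne
      have hne' : s(x, y) ≠ s(v, w) := fun h => hne ⟨by simp [h], hxyne⟩
      rcases hadj.2 with h' | h'
      · exact reach_iff_of_adj hvw h' hne'
      · have hne2 : s(y, x) ≠ s(v, w) := by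
          rw [show s(y, x) = s(x, y) from Sym2.eq_swap]; exact hne'
        exact (reach_iff_of_adj hvw h' hne2).symm
    have inv : ∀ {a b : Fin m} (q : ((gp P) \ fromEdgeSet {s(v, w)}).Walk a b),
        (Reach P a v ↔ Reach P b v) := by
      intro a b q
      induction q with
      | nil => exact Iff.rfl
      | cons ha _ ih => exact (cross ha).trans ih
    exact not_reach_back hP hvw ((inv p).mp (reach_refl P v))
  intro v w hadj
  rcases hadj.2 with h' | h'
  · exact key v w h'
  · rw [Sym2.eq_swap]; exact key w v h'

lemma gp_roots {P : Fin m → Option (Fin m)} (hP : Acy P) :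
    ∀ c : (gp P).ConnectedComponent,
      ∃! x, x ∈ rts P ∧ (gp P).connectedComponentMk x = c := by
  intro c
  induction c using SimpleGraph.ConnectedComponent.ind with
  | _ v =>
    refine ⟨rootv hP v, ⟨rootv_mem_rts hP v,
      (ConnectedComponent.sound (reachable_of_reach hP (rootv_reach hP v))).symm⟩, ?_⟩
    rintro u ⟨hu1, hu2⟩
    have : (gp P).Reachable u v := ConnectedComponent.eq.mp hu2
    have h2 : rootv hP u = rootv hP v := rootv_eq_of_reachable hP this
    rw [← h2, rootv_eq_self hP (mem_rts.mp hu1)]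

end Graph

section Psi

open SimpleGraph

variable {G : SimpleGraph (Fin m)} {R : Finset (Fin m)}

/-- reach implies reachability for any compatible parent map. -/
lemma reach_reachable_compat {P : Fin m → Option (Fin m)}
    (hadjP : ∀ x y, P x = some y → G.Adj x y) {u z : Fin m} (h : Reach P u z) :
    G.Reachable u z := by
  obtain ⟨j, hj⟩ := h
  induction j generalizing u with
  | zero => simp only [iter_zero, Option.some_inj] at hj; exact hj ▸ Reachable.refl u
  | succ j ih =>
    rw [iter_succ] at hj
    cases hPu : P u with
    | none => rw [hPu, iter_none] at hj; simp at hj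
    | some x => rw [hPu] at hj; exact ((hadjP u x hPu).reachable).trans (ih hj)

/-- edge-avoiding walk to the root (global hypothesis version). -/
lemma walk_avoidE {P : Fin m → Option (Fin m)} (hP : Acy P)
    (hadjP : ∀ x y, P x = some y → G.Adj x y) {e : Sym2 (Fin m)}
    (He : ∀ x y, P x = some y → s(x, y) ≠ e) (u : Fin m) :
    (G \ fromEdgeSet {e}).Reachable u (rootv hP u) := by
  suffices H : ∀ n u, ht hP u = n → (G \ fromEdgeSet {e}).Reachable u (rootv hP u) from
    H _ u rfl
  intro n
  induction n using Nat.strong_induction_on with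
  | _ n ih =>
    intro u hn
    cases hPu : P u with
    | none => rw [rootv_eq_self hP hPu]
    | some z =>
      have hadj : (G \ fromEdgeSet {e}).Adj u z := by
        rw [sdiff_adj, fromEdgeSet_adj]
        exact ⟨hadjP u z hPu, fun hc => He u z hPu hc.1⟩
      rw [rootv_parent hP hPu]
      exact hadj.reachable.trans (ih (ht hP z) (hn ▸ ht_parent hP hPu) z rfl)

/-- vertex-avoiding walk to the root. -/
lemma walk_avoidV {P : Fin m → Option (Fin m)} (hP : Acy P)
    (hadjP : ∀ x y, P x = some y → G.Adj x y) {e : Sym2 (Fin m)} {v : Fin m}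
    (He : ∀ x y, P x = some y → x ≠ v → y ≠ v → s(x, y) ≠ e) {u : Fin m}
    (hu : ¬ Reach P u v) :
    (G \ fromEdgeSet {e}).Reachable u (rootv hP u) := by
  suffices H : ∀ n u, ht hP u = n → ¬ Reach P u v →
      (G \ fromEdgeSet {e}).Reachable u (rootv hP u) from H _ u rfl hu
  intro n
  induction n using Nat.strong_induction_on with
  | _ n ih =>
    intro u hn hu
    have huv : u ≠ v := fun h => hu (h ▸ reach_refl P u)
    cases hPu : P u with
    | none => rw [rootv_eq_self hP hPu]
    | some z =>
      have hzv : z ≠ v := fun h => hu (h ▸ reach_step hPu)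
      have hadj : (G \ fromEdgeSet {e}).Adj u z := by
        rw [sdiff_adj, fromEdgeSet_adj]
        exact ⟨hadjP u z hPu, fun hc => He u z hPu huv hzv hc.1⟩
      rw [rootv_parent hP hPu]
      refine hadj.reachable.trans (ih (ht hP z) (hn ▸ ht_parent hP hPu) z rfl ?_)
      exact fun h => hu (reach_step_trans hPu h)

variable (hR : ∀ c : G.ConnectedComponent, ∃! v, v ∈ R ∧ G.connectedComponentMk v = c)

/-- the root of the component of `v`. -/
noncomputable def rfun (v : Fin m) : Fin m := (hR (G.connectedComponentMk v)).choose

lemma rfun_mem (v) : rfun hR v ∈ R := (hR (G.connectedComponentMk v)).choose_spec.1.1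

lemma rfun_mk (v) : G.connectedComponentMk (rfun hR v) = G.connectedComponentMk v :=
  (hR (G.connectedComponentMk v)).choose_spec.1.2

lemma rfun_uniq {u v} (hu : u ∈ R)
    (hmk : G.connectedComponentMk u = G.connectedComponentMk v) : u = rfun hR v :=
  (hR (G.connectedComponentMk v)).choose_spec.2 u ⟨hu, hmk⟩

lemma rfun_eq_of_mk {u v} (hmk : G.connectedComponentMk u = G.connectedComponentMk v) :
    rfun hR u = rfun hR v :=
  rfun_uniq hR (rfun_mem hR u) ((rfun_mk hR u).trans hmk)

lemma exists_parent_aux {G : SimpleGraph (Fin m)} {v r : Fin m} (hv : v ≠ r)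
    (hreach : G.Reachable v r) : ∃ w, G.Adj v w ∧ G.dist w r < G.dist v r := by
  have hd : G.dist v r ≠ 0 := by
    intro h
    rcases (G.dist_eq_zero_iff_eq_or_not_reachable).mp h with h' | h'
    · exact hv h'
    · exact h' hreach
  obtain ⟨p, hp⟩ := hreach.exists_walk_length_eq_dist
  cases p with
  | nil => exact absurd rfl hv
  | @cons _ b _ ha q =>
    refine ⟨b, ha, ?_⟩
    have h1 : G.dist b r ≤ q.length := SimpleGraph.dist_le q
    rw [SimpleGraph.Walk.length_cons] at hp
    omega

lemma exists_parent {v : Fin m} (hv : v ≠ rfun hR v) :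
    ∃ w, G.Adj v w ∧ G.dist w (rfun hR v) < G.dist v (rfun hR v) :=
  exists_parent_aux hv (ConnectedComponent.eq.mp (rfun_mk hR v).symm)

/-- the parent map constructed from a rooted forest. -/
noncomputable def psi : Fin m → Option (Fin m) := fun v =>
  if h : v = rfun hR v then none else some (exists_parent hR h).choose

lemma psi_none_iff {v} : psi hR v = none ↔ v = rfun hR v := by
  unfold psi
  by_cases h : v = rfun hR v
  · rw [dif_pos h]; exact iff_of_true rfl h
  · rw [dif_neg h]; exact iff_of_false (by simp) h

lemma psi_none_iff_mem {v} : psi hR v = none ↔ v ∈ R := by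
  rw [psi_none_iff]
  constructor
  · intro h; rw [h]; exact rfun_mem hR v
  · intro h; exact rfun_uniq hR h rfl

lemma psi_some {v w} (h : psi hR v = some w) :
    G.Adj v w ∧ G.dist w (rfun hR v) < G.dist v (rfun hR v) := by
  unfold psi at h
  by_cases hv : v = rfun hR v
  · rw [dif_pos hv] at h; exact absurd h (by simp)
  · rw [dif_neg hv, Option.some_inj] at h
    exact h ▸ (exists_parent hR hv).choose_spec

lemma psi_adj (v w : Fin m) (h : psi hR v = some w) : G.Adj v w := (psi_some hR h).1

lemma psi_acy : Acy (psi hR) := by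
  suffices H : ∀ n v, G.dist v (rfun hR v) = n → ∃ j, iter (psi hR) j (some v) = none from
    fun v => H _ v rfl
  intro n
  induction n using Nat.strong_induction_on with
  | _ n ih =>
    intro v hn
    cases hPv : psi hR v with
    | none => exact ⟨1, by rw [iter_succ, hPv]; rfl⟩
    | some w =>
      obtain ⟨hadj, hdist⟩ := psi_some hR hPv
      have hmk : G.connectedComponentMk w = G.connectedComponentMk v :=
        (ConnectedComponent.sound hadj.reachable).symm
      have hrw : rfun hR w = rfun hR v := rfun_eq_of_mk hR hmk
      obtain ⟨j, hj⟩ := ih (G.dist w (rfun hR w)) (by rw [hrw, ← hn]; exact hdist) w rfl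
      exact ⟨j + 1, by rw [iter_succ, hPv]; exact hj⟩

include hR in
/-- uniqueness of compatible parent maps on an acyclic graph. -/
lemma parent_unique (hacy : G.IsAcyclic)
    {P1 P2 : Fin m → Option (Fin m)}
    (h1a : Acy P1) (h1r : ∀ v, P1 v = none ↔ v ∈ R)
    (h1adj : ∀ x y, P1 x = some y → G.Adj x y)
    (h2a : Acy P2) (h2r : ∀ v, P2 v = none ↔ v ∈ R)
    (h2adj : ∀ x y, P2 x = some y → G.Adj x y) :
    P1 = P2 := by
  funext v
  by_cases hv : v ∈ R
  · rw [(h1r v).mpr hv, (h2r v).mpr hv]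
  · cases h1v : P1 v with
    | none => exact absurd ((h1r v).mp h1v) hv
    | some w1 =>
      cases h2v : P2 v with
      | none => exact absurd ((h2r v).mp h2v) hv
      | some w2 =>
        by_cases hww : w1 = w2
        · rw [hww]
        exfalso
        have hadj1 : G.Adj v w1 := h1adj v w1 h1v
        have hbr : G.IsBridge s(v, w1) := isAcyclic_iff_forall_adj_isBridge.mp hacy hadj1
        rw [isBridge_iff] at hbr
        apply hbr
        set e := s(v, w1) with he
        set G' := G \ fromEdgeSet {e} with hG'
        -- condition for vertex-avoid walks
        have Hx : ∀ (P : Fin m → Option (Fin m)), ∀ x y, P x = some y → x ≠ v → y ≠ v →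
            s(x, y) ≠ e := by
          intro P x y _ hxv hyv hc
          rw [he, Sym2.eq_iff] at hc
          rcases hc with ⟨h', _⟩ | ⟨_, h'⟩
          · exact hxv h'
          · exact hyv h'
        have hw1 : G'.Reachable w1 (rootv h1a w1) :=
          walk_avoidV h1a h1adj (Hx P1) (not_reach_back h1a h1v)
        have hw2 : G'.Reachable w2 (rootv h2a w2) :=
          walk_avoidV h2a h2adj (Hx P2) (not_reach_back h2a h2v)
        have hadj2 : G'.Adj v w2 := by
          rw [hG', sdiff_adj, fromEdgeSet_adj]
          refine ⟨h2adj v w2 h2v, ?_⟩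
          rintro ⟨hc, -⟩
          rw [Set.mem_singleton_iff, he, Sym2.eq_iff] at hc
          rcases hc with ⟨-, h'⟩ | ⟨h', -⟩
          · exact hww h'.symm
          · exact hadj1.ne h'
        -- the two roots coincide
        have hroot_mem1 : rootv h1a w1 ∈ R := (h1r _).mp (rootv_none h1a w1)
        have hroot_mem2 : rootv h2a w2 ∈ R := (h2r _).mp (rootv_none h2a w2)
        have hmk1 : G.connectedComponentMk (rootv h1a w1) = G.connectedComponentMk v := by
          have hr : G.Reachable w1 (rootv h1a w1) :=
            reach_reachable_compat h1adj (rootv_reach h1a w1)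
          exact (ConnectedComponent.sound hr.symm).trans
            (ConnectedComponent.sound hadj1.reachable).symm
        have hmk2 : G.connectedComponentMk (rootv h2a w2) = G.connectedComponentMk v := by
          have hr : G.Reachable w2 (rootv h2a w2) :=
            reach_reachable_compat h2adj (rootv_reach h2a w2)
          exact (ConnectedComponent.sound hr.symm).trans
            (ConnectedComponent.sound (h2adj v w2 h2v).reachable).symm
        have hrr : rootv h1a w1 = rootv h2a w2 :=
          (rfun_uniq hR hroot_mem1 hmk1).trans (rfun_uniq hR hroot_mem2 hmk2).symm
        exact hadj2.reachable.trans (hw2.trans (hrr ▸ hw1.symm))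

/-- the graph of `psi` is the original graph. -/
lemma gp_psi (hacy : G.IsAcyclic) : gp (psi hR) = G := by
  ext v w
  constructor
  · rintro ⟨hne, h | h⟩
    · exact psi_adj hR _ _ h
    · exact (psi_adj hR _ _ h).symm
  · intro hadj
    by_contra hng
    rw [gp_adj] at hng
    push_neg at hng
    obtain ⟨hp1, hp2⟩ := hng hadj.ne
    have hbr : G.IsBridge s(v, w) := isAcyclic_iff_forall_adj_isBridge.mp hacy hadj
    rw [isBridge_iff] at hbr
    apply hbr
    set e := s(v, w) with he
    have He : ∀ x y, psi hR x = some y → s(x, y) ≠ e := by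
      intro x y hxy hc
      rw [he, Sym2.eq_iff] at hc
      rcases hc with ⟨rfl, rfl⟩ | ⟨rfl, rfl⟩
      · exact hp1 hxy
      · exact hp2 hxy
    have h1 := walk_avoidE (psi_acy hR) (psi_adj hR) He v
    have h2 := walk_avoidE (psi_acy hR) (psi_adj hR) He w

    -- roots of v and w coincide
    have hmkvw : G.connectedComponentMk v = G.connectedComponentMk w :=
      ConnectedComponent.sound hadj.reachable
    have hmk1 : G.connectedComponentMk (rootv (psi_acy hR) v) = G.connectedComponentMk w := by
      have hr : G.Reachable v (rootv (psi_acy hR) v) :=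
        reach_reachable_compat (psi_adj hR) (rootv_reach (psi_acy hR) v)
      exact (ConnectedComponent.sound hr.symm).trans hmkvw
    have hmk2 : G.connectedComponentMk (rootv (psi_acy hR) w) = G.connectedComponentMk w := by
      have hr : G.Reachable w (rootv (psi_acy hR) w) :=
        reach_reachable_compat (psi_adj hR) (rootv_reach (psi_acy hR) w)
      exact ConnectedComponent.sound hr.symm
    have hmem1 : rootv (psi_acy hR) v ∈ R := (psi_none_iff_mem hR).mp (rootv_none _ v)
    have hmem2 : rootv (psi_acy hR) w ∈ R := (psi_none_iff_mem hR).mp (rootv_none _ w)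
    have hrr : rootv (psi_acy hR) v = rootv (psi_acy hR) w :=
      (rfun_uniq hR hmem1 hmk1).trans (rfun_uniq hR hmem2 hmk2).symm
    exact h1.trans (hrr ▸ h2.symm)

lemma rts_psi : rts (psi hR) = R := by
  ext v
  rw [mem_rts, psi_none_iff_mem hR]

end Psi

section Count

open scoped Classical

/-- number of acyclic parent maps with `k` roots. -/
noncomputable def t (m k : ℕ) : ℕ :=
  Nat.card {P : Fin m → Option (Fin m) // Acy P ∧ (rts P).card = k}

/-- the rooted-forest/parent-map bijection. -/
noncomputable def forestEquiv (m k : ℕ) :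
    {F : SimpleGraph (Fin m) × Finset (Fin m) //
      F.1.IsAcyclic ∧
      (∀ c : F.1.ConnectedComponent, ∃! v, v ∈ F.2 ∧ F.1.connectedComponentMk v = c) ∧
      F.2.card = k} ≃
    {P : Fin m → Option (Fin m) // Acy P ∧ (rts P).card = k} where
  toFun F := ⟨psi F.2.2.1, psi_acy _, by rw [rts_psi]; exact F.2.2.2⟩
  invFun P := ⟨(gp P.1, rts P.1), gp_acyclic P.2.1, gp_roots P.2.1, P.2.2⟩
  left_inv := by
    rintro ⟨⟨G, R⟩, hacy, hR, hcard⟩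
    apply Subtype.ext
    simp only
    exact Prod.ext (gp_psi hR hacy) (rts_psi hR)
  right_inv := by
    rintro ⟨P, hP, hcard⟩
    apply Subtype.ext
    simp only
    exact parent_unique (gp_roots hP) (gp_acyclic hP)
      (psi_acy _) (fun v => psi_none_iff_mem _) (psi_adj _)
      hP (fun v => mem_rts.symm) (fun x y h => adj_of_parent hP h)

/-- helper: subtype of a product as a sigma over a subtype. -/
def prodSubtypeEquiv {α β : Type*} (p : α → Prop) (q : α → β → Prop) :
    {x : α × β // p x.1 ∧ q x.1 x.2} ≃ Σ a : {a // p a}, {b // q a.1 b} where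
  toFun x := ⟨⟨x.1.1, x.2.1⟩, ⟨x.1.2, x.2.2⟩⟩
  invFun y := ⟨(y.1.1, y.2.1), y.1.2, y.2.2⟩
  left_inv x := rfl
  right_inv y := rfl

lemma card_roots_subtype {P : Fin m → Option (Fin m)} :
    Fintype.card {c : Fin m // P c = none} = (rts P).card := by
  rw [Fintype.card_subtype]
  congr 1

lemma card_nonroot {P : Fin m → Option (Fin m)} {k : ℕ} (hk : (rts P).card = k) :
    Fintype.card {c : Fin m // P c ≠ none} = m - k := by
  have := Fintype.card_subtype_compl (fun c : Fin m => P c = none)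
  rw [card_roots_subtype, hk, Fintype.card_fin] at this
  exact this

lemma sum_tree_sizes {Q : Fin m → Option (Fin m)} (hQ : Acy Q) :
    ∑ c ∈ rts Q, (Finset.univ.filter fun p => rootv hQ p = c).card = m := by
  have h := Finset.card_eq_sum_card_fiberwise
    (f := rootv hQ) (s := Finset.univ) (t := rts Q)
    (fun x _ => rootv_mem_rts hQ x)
  rw [Finset.card_univ, Fintype.card_fin] at h
  rw [← h]

lemma card_pair {Q : Fin m → Option (Fin m)} {k : ℕ} (hQ : Acy Q)
    (hk : (rts Q).card = k + 1) :
    Fintype.card {cp : Fin m × Fin m // Q cp.1 = none ∧ rootv hQ cp.2 ≠ cp.1} = k * m := by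
  rw [Fintype.card_congr (Equiv.subtypeProdEquivSigmaSubtype
    (fun c p => Q c = none ∧ rootv hQ p ≠ c)), Fintype.card_sigma]
  have hstep : ∀ c : Fin m,
      Fintype.card {p : Fin m // Q c = none ∧ rootv hQ p ≠ c} =
        if Q c = none then m - (Finset.univ.filter fun p => rootv hQ p = c).card else 0 := by
    intro c
    by_cases hc : Q c = none
    · rw [if_pos hc]
      rw [Fintype.card_congr (Equiv.subtypeEquivRight
        (fun p => by simp [hc] : ∀ p, (Q c = none ∧ rootv hQ p ≠ c) ↔ ¬ rootv hQ p = c))]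
      rw [Fintype.card_subtype_compl, Fintype.card_fin]
      congr 1
      rw [Fintype.card_subtype]
    · rw [if_neg hc]
      rw [Fintype.card_eq_zero_iff]
      exact ⟨fun p => hc p.2.1⟩
  rw [Finset.sum_congr rfl (fun c _ => hstep c)]
  rw [← Finset.sum_filter]
  have hrts : (Finset.univ.filter fun c : Fin m => Q c = none) = rts Q :=
    Finset.filter_congr_decidable _ _ _
  rw [hrts]
  set fib := fun c => (Finset.univ.filter fun p => rootv hQ p = c).card with hfib
  have hsum : ∑ c ∈ rts Q, fib c = m := sum_tree_sizes hQ
  have hle : ∀ c ∈ rts Q, fib c ≤ m := by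
    intro c _
    calc fib c ≤ Finset.univ.card := Finset.card_filter_le _ _
    _ = m := by rw [Finset.card_univ, Fintype.card_fin]
  have key : (∑ c ∈ rts Q, (m - fib c)) + ∑ c ∈ rts Q, fib c = ∑ c ∈ rts Q, m := by
    rw [← Finset.sum_add_distrib]
    exact Finset.sum_congr rfl (fun c hc => Nat.sub_add_cancel (hle c hc))
  rw [hsum, Finset.sum_const, hk, smul_eq_mul,
    show (k + 1) * m = k * m + m by ring] at key
  exact Nat.add_right_cancel key

/-- condition: acyclic with `k` roots. -/
abbrev cond (m k : ℕ) (P : Fin m → Option (Fin m)) : Prop := Acy P ∧ (rts P).card = k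

lemma t_eq_card (m k : ℕ) : t m k = Fintype.card {P : Fin m → Option (Fin m) // cond m k P} :=
  Nat.card_eq_fintype_card

lemma card_D (m k : ℕ) :
    Fintype.card {x : (Fin m → Option (Fin m)) × Fin m // cond m k x.1 ∧ x.1 x.2 ≠ none} =
      t m k * (m - k) := by
  rw [Fintype.card_congr (prodSubtypeEquiv (cond m k) (fun P c => P c ≠ none)),
    Fintype.card_sigma]
  rw [Finset.sum_congr rfl (fun (P : {P // cond m k P}) _ => card_nonroot P.2.2)]
  rw [Finset.sum_const, smul_eq_mul, Finset.card_univ, t_eq_card]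

lemma card_E (m k : ℕ) :
    Fintype.card {y : (Fin m → Option (Fin m)) × (Fin m × Fin m) //
      cond m (k+1) y.1 ∧ (y.1 y.2.1 = none ∧
        ∀ h : Acy y.1, rootv h y.2.2 ≠ y.2.1)} = t m (k+1) * (k * m) := by
  have e : {y : (Fin m → Option (Fin m)) × (Fin m × Fin m) //
        cond m (k+1) y.1 ∧ (y.1 y.2.1 = none ∧ ∀ h : Acy y.1, rootv h y.2.2 ≠ y.2.1)} ≃
      Σ Q : {Q : Fin m → Option (Fin m) // cond m (k+1) Q},
        {cp : Fin m × Fin m // Q.1 cp.1 = none ∧ ∀ h : Acy Q.1, rootv h cp.2 ≠ cp.1} :=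
    prodSubtypeEquiv (cond m (k+1))
      (fun Q (cp : Fin m × Fin m) => Q cp.1 = none ∧ ∀ h : Acy Q, rootv h cp.2 ≠ cp.1)
  have hcongr := Fintype.card_congr e
  rw [hcongr, Fintype.card_sigma]
  have hstep : ∀ Q : {Q : Fin m → Option (Fin m) // cond m (k+1) Q},
      Fintype.card {cp : Fin m × Fin m //
        Q.1 cp.1 = none ∧ ∀ h : Acy Q.1, rootv h cp.2 ≠ cp.1} = k * m := by
    intro Q
    have hiff : ∀ cp : Fin m × Fin m,
        (Q.1 cp.1 = none ∧ ∀ h : Acy Q.1, rootv h cp.2 ≠ cp.1) ↔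
          (Q.1 cp.1 = none ∧ rootv Q.2.1 cp.2 ≠ cp.1) := by
      intro cp
      constructor
      · rintro ⟨h1, h2⟩; exact ⟨h1, h2 Q.2.1⟩
      · rintro ⟨h1, h2⟩; exact ⟨h1, fun _ => h2⟩
    rw [Fintype.card_congr (Equiv.subtypeEquivRight hiff)]
    exact card_pair Q.2.1 Q.2.2
  rw [Finset.sum_congr rfl (fun Q _ => hstep Q)]
  rw [Finset.sum_const, smul_eq_mul, Finset.card_univ, t_eq_card]

/-- Pitman-style bijection: adding the edge `c → p`. -/
noncomputable def DEequiv (m k : ℕ) :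
    {y : (Fin m → Option (Fin m)) × (Fin m × Fin m) //
      cond m (k+1) y.1 ∧ (y.1 y.2.1 = none ∧
        ∀ h : Acy y.1, rootv h y.2.2 ≠ y.2.1)} ≃
    {x : (Fin m → Option (Fin m)) × Fin m // cond m k x.1 ∧ x.1 x.2 ≠ none} where
  toFun y := ⟨(Function.update y.1.1 y.1.2.1 (some y.1.2.2), y.1.2.1), by
    obtain ⟨⟨Q, c, p⟩, ⟨hQ, hk⟩, hc, hp⟩ := y
    dsimp only at hQ hk hc hp ⊢
    have hnr : ¬ Reach Q p c := fun hr => hp hQ (rootv_eq_of hQ hr hc)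
    refine ⟨⟨acy_update_some hQ hc hnr, ?_⟩, by simp⟩
    rw [rts_update_some, Finset.card_erase_of_mem (mem_rts.mpr hc), hk]
    omega⟩
  invFun x := ⟨(Function.update x.1.1 x.1.2 none,
      (x.1.2, (x.1.1 x.1.2).get (Option.ne_none_iff_isSome.mp x.2.2))), by
    obtain ⟨⟨P, c⟩, ⟨hP, hk⟩, hne⟩ := x
    dsimp only at hP hk hne ⊢
    have hs : (P c).isSome := Option.ne_none_iff_isSome.mp hne
    have hPc : P c = some ((P c).get hs) := (Option.some_get hs).symm
    refine ⟨⟨acy_update_none hP c, ?_⟩, by simp, ?_⟩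
    · rw [rts_update_none, Finset.card_insert_of_notMem (fun hmem => hne (mem_rts.mp hmem)),
        hk]
    · intro h heq
      have heq' : rootv h ((P c).get hs) = c := heq
      have hr1 := rootv_reach h ((P c).get hs)
      rw [heq'] at hr1
      have hr2 : Reach P ((P c).get hs) c := reach_of_update_none rfl hr1
      have h3 := ht_parent hP hPc
      have h4 := reach_ht_le hP hr2
      omega⟩
  left_inv := by
    rintro ⟨⟨Q, c, p⟩, ⟨hQ, hk⟩, hc, hp⟩
    dsimp only at hQ hk hc hp
    apply Subtype.ext
    dsimp only
    refine Prod.ext ?_ (Prod.ext rfl ?_)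
    · funext v
      show Function.update (Function.update Q c (some p)) c none v = Q v
      rw [Function.update_idem]
      by_cases hv : v = c
      · subst hv
        rw [Function.update_self]
        exact hc.symm
      · rw [Function.update_of_ne hv]
    · show (Function.update Q c (some p) c).get _ = p
      simp
  right_inv := by
    rintro ⟨⟨P, c⟩, ⟨hP, hk⟩, hne⟩
    dsimp only at hP hk hne
    apply Subtype.ext
    dsimp only
    refine Prod.ext ?_ rfl
    show Function.update (Function.update P c none) c
        (some ((P c).get (Option.ne_none_iff_isSome.mp hne))) = P
    rw [Function.update_idem, Option.some_get, Function.update_eq_self]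

lemma t_rec (m k : ℕ) : t m k * (m - k) = t m (k+1) * (k * m) :=
  (card_D m k).symm.trans ((Fintype.card_congr (DEequiv m k)).symm.trans (card_E m k))

lemma t_base (m : ℕ) : t m m = 1 := by
  unfold t
  rw [Nat.card_eq_one_iff_unique]
  constructor
  · constructor
    intro a b
    apply Subtype.ext
    have key : ∀ (P : Fin m → Option (Fin m)), Acy P ∧ (rts P).card = m → P = fun _ => none := by
      intro P ⟨_, hk⟩
      have huniv : rts P = Finset.univ := by
        apply Finset.eq_univ_of_card
        rw [hk, Fintype.card_fin]
      funext v
      exact mem_rts.mp (huniv ▸ Finset.mem_univ v)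
    rw [key a.1 a.2, key b.1 b.2]
  · refine ⟨⟨fun _ => none, fun v => ⟨1, by rw [iter_succ]; rfl⟩, ?_⟩⟩
    rw [show rts (fun _ : Fin m => none) = Finset.univ from Finset.eq_univ_of_forall
      (fun v => mem_rts.mpr rfl), Finset.card_univ, Fintype.card_fin]

lemma t_closed (m : ℕ) : ∀ d k, k + d = m → 1 ≤ k →
    t m k = Nat.choose (m-1) (k-1) * m ^ (m-k) := by
  intro d
  induction d with
  | zero =>
    intro k hkd _
    have : k = m := by omega
    subst this
    rw [t_base, Nat.sub_self, pow_zero, Nat.choose_self]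
    omega
  | succ d ih =>
    intro k hkd hk1
    have hkm : k < m := by omega
    have h2 : t m (k+1) = Nat.choose (m-1) k * m ^ (m-(k+1)) := by
      have := ih (k+1) (by omega) (by omega)
      simpa using this
    have hrec := t_rec m k
    rw [h2] at hrec
    have hpow : m ^ (m-(k+1)) * m = m ^ (m-k) := by
      rw [← pow_succ]
      congr 1
      omega
    have hch : Nat.choose (m-1) k * k = Nat.choose (m-1) (k-1) * (m-k) := by
      have := Nat.choose_succ_right_eq (m-1) (k-1)
      rw [show k - 1 + 1 = k by omega] at this
      rw [this]
      congr 1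
      omega
    have hfinal : t m k * (m-k) = (Nat.choose (m-1) (k-1) * m ^ (m-k)) * (m-k) := by
      rw [hrec]
      calc Nat.choose (m-1) k * m ^ (m-(k+1)) * (k * m)
          = (Nat.choose (m-1) k * k) * (m ^ (m-(k+1)) * m) := by ring
        _ = (Nat.choose (m-1) (k-1) * (m-k)) * m ^ (m-k) := by rw [hch, hpow]
        _ = (Nat.choose (m-1) (k-1) * m ^ (m-k)) * (m-k) := by ring
    exact Nat.eq_of_mul_eq_mul_right (by omega) hfinal

end Count

end RF

lemma rootedForests_eq (m k : ℕ) : rootedForests m k = RF.t m k :=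
  Nat.card_congr (RF.forestEquiv m k)

/-- For all `m ≥ 1` and all integers `x`: `∑_{k=1}^{m} t_{m,k} x^k = x(x+m)^{m-1}`. -/
theorem stmt_10 (m : ℕ) (hm : 1 ≤ m) (x : ℤ) :
    ∑ k ∈ Finset.Icc 1 m, (rootedForests m k : ℤ) * x ^ k = x * (x + m) ^ (m - 1) := by
  have hval : ∀ k, 1 ≤ k → k ≤ m →
      (rootedForests m k : ℤ) = (((m-1).choose (k-1) * m ^ (m-k) : ℕ) : ℤ) := by
    intro k h1 h2
    rw [rootedForests_eq, RF.t_closed m (m - k) k (by omega) h1]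
  calc ∑ k ∈ Finset.Icc 1 m, (rootedForests m k : ℤ) * x ^ k
      = ∑ k ∈ Finset.Icc 1 m, (((m-1).choose (k-1) * m ^ (m-k) : ℕ) : ℤ) * x ^ k := by
        refine Finset.sum_congr rfl fun k hk => ?_
        rw [Finset.mem_Icc] at hk
        rw [hval k hk.1 hk.2]
    _ = ∑ j ∈ Finset.range m, (((m-1).choose j * m ^ (m-1-j) : ℕ) : ℤ) * x ^ (j+1) := by
        refine Finset.sum_bij' (fun k _ => k - 1) (fun j _ => j + 1) ?_ ?_ ?_ ?_ ?_
        · intro k hk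
          rw [Finset.mem_Icc] at hk
          show k - 1 ∈ Finset.range m
          rw [Finset.mem_range]
          omega
        · intro j hj
          rw [Finset.mem_range] at hj
          show j + 1 ∈ Finset.Icc 1 m
          rw [Finset.mem_Icc]
          omega
        · intro k hk
          rw [Finset.mem_Icc] at hk
          show k - 1 + 1 = k
          omega
        · intro j hj
          show j + 1 - 1 = j
          omega
        · intro k hk
          rw [Finset.mem_Icc] at hk
          rw [show m - 1 - (k - 1) = m - k from by omega, show k - 1 + 1 = k from by omega]
    _ = x * ∑ j ∈ Finset.range m, x ^ j * (m:ℤ) ^ (m-1-j) * ((m-1).choose j : ℤ) := by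
        rw [Finset.mul_sum]
        refine Finset.sum_congr rfl fun j hj => ?_
        push_cast
        ring
    _ = x * (x + (m:ℤ)) ^ (m-1) := by
        rw [add_pow, show m - 1 + 1 = m from by omega]
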